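/- In the greedy pairing algorithm for the reversed reflection diamond, at each iteration j ∈ {1,...,p−1}, if b_j has not yet been paired, then there exists an index j_0 already processed or equal to ℓ_p such that b_{j_0} ≤_b b_j and d_{j_0} ≤_d d_j. -/
import Mathlib


/-- A run of the greedy pairing algorithm for the reversed reflection diamond.
Births are the values `b k` compared by the relation `leb`; `ell j` is the index of the
birth paired with death `d j` at step `j`, and `S j` is the set of indices whose births
have been paired after the first `j` steps (with the minimal birth `b (ell (p-1))` paired
initially, with the death `d (p-1)`). -/
structure GreedyRun (p : ℕ) {β : Type} (leb : β → β → Prop) (b : Fin p → β) where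
  hp : 0 < p
  ell : Fin p → Fin p
  S : ℕ → Finset (Fin p)
  /-- `b (ell (p-1))` is the minimal birth in the order `leb`. -/
  hlast : ∀ k, leb (b (ell ⟨p - 1, by omega⟩)) (b k)
  /-- initially only the minimal birth is paired (with the minimal death `d (p-1)`). -/
  hS0 : S 0 = {ell ⟨p - 1, by omega⟩}
  /-- the greedy step: at step `j` (for `j = 0,…,p-2`), if the birth `b j` is not yet
  paired then it is paired with `d j`; otherwise `d j` is paired with the `leb`-minimal
  not-yet-paired birth. -/
  hstep : ∀ j : ℕ, ∀ hj : j < p - 1,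
    if (⟨j, by omega⟩ : Fin p) ∈ S j then
      (ell ⟨j, by omega⟩ ∉ S j ∧
       (∀ k : Fin p, k ∉ S j → leb (b (ell ⟨j, by omega⟩)) (b k)) ∧
       S (j + 1) = insert (ell ⟨j, by omega⟩) (S j))
    else
      (ell ⟨j, by omega⟩ = ⟨j, by omega⟩ ∧ S (j + 1) = insert (⟨j, by omega⟩ : Fin p) (S j))

/-- **Well-definedness of the greedy pairing choice.** In the greedy pairing algorithm,
with deaths sorted `d 0 ≥_d d 1 ≥_d ⋯ ≥_d d (p-1)`, at each step `j < p - 1`, if the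
birth `b j` has not yet been paired then there exists an already-paired index `j₀` with
`b j₀ ≤_b b j` and `d j₀ ≤_d d j`. -/
theorem greedy_unpaired_exists_dominated (p : ℕ) (β δ : Type)
    [LinearOrder β] [LinearOrder δ]
    (b : Fin p → β) (d : Fin p → δ)
    (hsorted : ∀ j k : Fin p, j ≤ k → d k ≤ d j)
    (run : GreedyRun p (· ≤ ·) b) :
    ∀ j : Fin p, (j : ℕ) < p - 1 → j ∉ run.S (j : ℕ) →
      ∃ j₀ ∈ run.S (j : ℕ), b j₀ ≤ b j ∧ d j₀ ≤ d j := by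
  have hp := run.hp
  have key : ∀ n : ℕ, n ≤ p - 1 →
      ((∀ i : Fin p, (i : ℕ) < n → i ∈ run.S n) ∧
       ∃ m ∈ run.S n, n ≤ (m : ℕ) ∧ ∀ k, k ∉ run.S n → b m ≤ b k) := by
    intro n
    induction n with
    | zero =>
      intro _
      refine ⟨fun i hi => by omega, run.ell ⟨p - 1, by omega⟩, ?_, Nat.zero_le _,
        fun k _ => run.hlast k⟩
      rw [run.hS0]; exact Finset.mem_singleton_self _
    | succ n ih =>
      intro hn
      have hlt : n < p - 1 := by omega
      obtain ⟨hA, m, hmS, hmn, hmmin⟩ := ih (by omega)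
      have hs := run.hstep n hlt
      by_cases hc : (⟨n, by omega⟩ : Fin p) ∈ run.S n
      · rw [if_pos hc] at hs
        obtain ⟨h1, h2, h3⟩ := hs
        constructor
        · intro i hi
          rw [h3, Finset.mem_insert]
          rcases Nat.lt_or_ge (i : ℕ) n with h | h
          · exact Or.inr (hA i h)
          · have : i = (⟨n, by omega⟩ : Fin p) := Fin.ext (show (i : ℕ) = n by omega)
            exact Or.inr (this ▸ hc)
        · refine ⟨run.ell ⟨n, by omega⟩, by rw [h3]; exact Finset.mem_insert_self _ _, ?_, ?_⟩
          · have hne : (run.ell ⟨n, by omega⟩ : ℕ) ≠ n := by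
              intro h
              exact h1 (by rw [show run.ell ⟨n, by omega⟩ = (⟨n, by omega⟩ : Fin p) from Fin.ext h]; exact hc)
            have hge : ¬ ((run.ell ⟨n, by omega⟩ : ℕ) < n) := fun h => h1 (hA _ h)
            omega
          · intro k hk
            rw [h3, Finset.mem_insert] at hk
            push_neg at hk
            exact h2 k hk.2
      · rw [if_neg hc] at hs
        obtain ⟨h1, h3⟩ := hs
        constructor
        · intro i hi
          rw [h3, Finset.mem_insert]
          rcases Nat.lt_or_ge (i : ℕ) n with h | h
          · exact Or.inr (hA i h)
          · exact Or.inl (Fin.ext (show (i : ℕ) = n by omega))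
        · refine ⟨m, by rw [h3]; exact Finset.mem_insert_of_mem hmS, ?_, ?_⟩
          · have hne : (m : ℕ) ≠ n := by
              intro h
              exact hc ((Fin.ext h : m = (⟨n, by omega⟩ : Fin p)) ▸ hmS)
            omega
          · intro k hk
            rw [h3, Finset.mem_insert] at hk
            push_neg at hk
            exact hmmin k hk.2
  intro j hj hjS
  obtain ⟨_, m, hmS, hmn, hmmin⟩ := key (j : ℕ) (by omega)
  exact ⟨m, hmS, hmmin j hjS, hsorted j m (by rwa [Fin.le_def])⟩
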